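/- For all integers K and t with 1 ≤ t < K, the MN PDA is a (K, C(K,t), C(K−1,t−1), C(K,t+1)) placement delivery array: every column contains exactly C(K−1,t−1) stars, every integer in {1,…,C(K,t+1)} occurs at least once in the array, and whenever two distinct entries are equal to the same integer they lie in distinct rows and distinct columns and the two cross positions (same row as one, same column as the other) are stars. -/

import Mathlib

/-- The MN PDA is a `(K, C(K,t), C(K-1,t-1), C(K,t+1))` placement delivery
array.  Rows are indexed by the `t`-element subsets `T` of `{1,…,K}`, columns by
`k ∈ {1,…,K}`; the entry at `(T,k)` is a star iff `k ∈ T`, and otherwise it is the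
integer `φ (insert k T)`, where `φ` is a bijection from the `(t+1)`-element subsets of
`{1,…,K}` onto `{1,…,C(K,t+1)}`. -/
theorem stmt_0 (K t : ℕ) (ht : 1 ≤ t) (htK : t < K)
    (φ : Finset ℕ → ℕ)
    (hφ : Set.BijOn φ {S : Finset ℕ | S ⊆ Finset.Icc 1 K ∧ S.card = t + 1}
      (↑(Finset.Icc 1 (K.choose (t + 1))) : Set ℕ)) :
    -- C1: each column contains exactly C(K-1, t-1) stars
    (∀ k ∈ Finset.Icc 1 K,
      (((Finset.Icc 1 K).powersetCard t).filter (fun T => k ∈ T)).card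
        = (K - 1).choose (t - 1)) ∧
    -- C2: every integer in {1,…,C(K,t+1)} occurs at least once
    (∀ s ∈ Finset.Icc 1 (K.choose (t + 1)),
      ∃ T ∈ (Finset.Icc 1 K).powersetCard t, ∃ k ∈ Finset.Icc 1 K,
        k ∉ T ∧ φ (insert k T) = s) ∧
    -- C3: equal integer entries lie in distinct rows and columns, with stars at the
    -- two cross positions
    (∀ T1 ∈ (Finset.Icc 1 K).powersetCard t, ∀ T2 ∈ (Finset.Icc 1 K).powersetCard t,
      ∀ k1 ∈ Finset.Icc 1 K, ∀ k2 ∈ Finset.Icc 1 K,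
        k1 ∉ T1 → k2 ∉ T2 → (T1, k1) ≠ (T2, k2) →
        φ (insert k1 T1) = φ (insert k2 T2) →
        T1 ≠ T2 ∧ k1 ≠ k2 ∧ k2 ∈ T1 ∧ k1 ∈ T2) := by
  refine ⟨?_, ?_, ?_⟩
  · intro k hk
    have : (((Finset.Icc 1 K).powersetCard t).filter (fun T => k ∈ T)).card
        = (((Finset.Icc 1 K).erase k).powersetCard (t - 1)).card := by
      apply Finset.card_nbij' (fun T => T.erase k) (fun T => insert k T)
      · intro T hT
        simp only [Finset.mem_coe, Finset.mem_filter, Finset.mem_powersetCard] at hT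
        obtain ⟨⟨hsub, hcard⟩, hkT⟩ := hT
        rw [Finset.mem_coe, Finset.mem_powersetCard]
        constructor
        · intro x hx
          rw [Finset.mem_erase] at hx ⊢
          exact ⟨hx.1, hsub hx.2⟩
        · rw [Finset.card_erase_of_mem hkT, hcard]
      · intro T hT
        rw [Finset.mem_coe, Finset.mem_powersetCard] at hT
        obtain ⟨hsub, hcard⟩ := hT
        have hkT : k ∉ T := fun h => (Finset.mem_erase.mp (hsub h)).1 rfl
        simp only [Finset.mem_coe, Finset.mem_filter, Finset.mem_powersetCard]
        refine ⟨⟨?_, ?_⟩, Finset.mem_insert_self _ _⟩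
        · intro x hx
          rcases Finset.mem_insert.mp hx with rfl | hx
          · exact hk
          · exact (Finset.mem_erase.mp (hsub hx)).2
        · rw [Finset.card_insert_of_notMem hkT, hcard]
          omega
      · intro T hT
        simp only [Finset.mem_coe, Finset.mem_filter] at hT
        exact Finset.insert_erase hT.2
      · intro T hT
        rw [Finset.mem_coe, Finset.mem_powersetCard] at hT
        have hkT : k ∉ T := fun h => (Finset.mem_erase.mp (hT.1 h)).1 rfl
        exact Finset.erase_insert hkT
    rw [this, Finset.card_powersetCard, Finset.card_erase_of_mem hk,
      Nat.card_Icc]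
    norm_num
  · intro s hs
    obtain ⟨S, hS, hφS⟩ := hφ.surjOn (by exact_mod_cast hs)
    obtain ⟨hSsub, hScard⟩ := hS
    have hne : S.Nonempty := Finset.card_pos.mp (by omega)
    obtain ⟨k, hkS⟩ := hne
    refine ⟨S.erase k, ?_, k, hSsub hkS, Finset.notMem_erase _ _, ?_⟩
    · rw [Finset.mem_powersetCard]
      exact ⟨(Finset.erase_subset _ _).trans hSsub,
        by rw [Finset.card_erase_of_mem hkS, hScard]; omega⟩
    · rw [Finset.insert_erase hkS]; exact hφS
  · intro T1 hT1 T2 hT2 k1 hk1 k2 hk2 hk1T1 hk2T2 hne heq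
    rw [Finset.mem_powersetCard] at hT1 hT2
    have hm1 : insert k1 T1 ∈ {S : Finset ℕ | S ⊆ Finset.Icc 1 K ∧ S.card = t + 1} :=
      ⟨Finset.insert_subset hk1 hT1.1, by rw [Finset.card_insert_of_notMem hk1T1, hT1.2]⟩
    have hm2 : insert k2 T2 ∈ {S : Finset ℕ | S ⊆ Finset.Icc 1 K ∧ S.card = t + 1} :=
      ⟨Finset.insert_subset hk2 hT2.1, by rw [Finset.card_insert_of_notMem hk2T2, hT2.2]⟩
    have hSeq : insert k1 T1 = insert k2 T2 := hφ.injOn hm1 hm2 heq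
    have hkne : k1 ≠ k2 := by
      rintro rfl
      apply hne
      have : T1 = T2 := by
        rw [← Finset.erase_insert hk1T1, ← Finset.erase_insert hk2T2, hSeq]
      rw [this]
    have hk1T2 : k1 ∈ T2 := by
      have : k1 ∈ insert k2 T2 := hSeq ▸ Finset.mem_insert_self k1 T1
      rcases Finset.mem_insert.mp this with h | h
      · exact absurd h hkne
      · exact h
    have hk2T1 : k2 ∈ T1 := by
      have : k2 ∈ insert k1 T1 := hSeq ▸ Finset.mem_insert_self k2 T2
      rcases Finset.mem_insert.mp this with h | h
      · exact absurd h hkne.symm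
      · exact h
    exact ⟨fun h => hk1T1 (h ▸ hk1T2), hkne, hk2T1, hk1T2⟩
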